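/- Let Γ be a countable group. A subgroup Λ ≤ Γ gives rise to a highly faithful coset action Λ\Γ ← Γ if and only if the closure in Sub(Γ) of the conjugacy class {γ^{-1}Λγ : γ ∈ Γ} contains the trivial subgroup {1}. Moreover, the set of subgroups Λ ≤ Γ whose coset action Λ\Γ ← Γ is highly faithful is a G_δ subset of Sub(Γ). -/
import Mathlib


/-- The Chabauty topology on the space of subgroups of `Γ`: the topology induced by the
injection `Sub(Γ) → {0,1}^Γ` (indicator functions), where `{0,1}^Γ` carries the product
of the discrete topologies. -/
instance chabauty (Γ : Type*) [Group Γ] : TopologicalSpace (Subgroup Γ) :=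
  TopologicalSpace.induced (fun (H : Subgroup Γ) (g : Γ) => g ∈ H)
    (@Pi.topologicalSpace Γ (fun _ => Prop) (fun _ => ⊥))

/-- The space of right cosets `Λ\Γ`. -/
def rQuot {Γ : Type*} [Group Γ] (Λ : Subgroup Γ) : Type _ :=
  Quotient (QuotientGroup.rightRel Λ)

/-- The right-translation action of `Γ` on the right coset space `Λ\Γ`:
`Λx · γ = Λxγ`. -/
def rAct {Γ : Type*} [Group Γ] (Λ : Subgroup Γ) (γ : Γ) : rQuot Λ → rQuot Λ :=
  Quotient.map' (fun x => x * γ) (by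
    intro x y h
    rw [QuotientGroup.rightRel_apply] at h ⊢
    have key : y * γ * (x * γ)⁻¹ = y * x⁻¹ := by group
    rw [key]; exact h)

/-- The right-translation action of `Γ` on `Λ\Γ` is highly transitive: for every `d ≥ 1`,
any `d`-tuple of pairwise distinct cosets can be mapped to any other by some `γ ∈ Γ`. -/
def HTcoset {Γ : Type*} [Group Γ] (Λ : Subgroup Γ) : Prop :=
  ∀ d : ℕ, 1 ≤ d → ∀ x y : Fin d → rQuot Λ,
    Function.Injective x → Function.Injective y →
    ∃ γ : Γ, ∀ i, rAct Λ γ (x i) = y i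

/-- `HT(Γ)`: the set of infinite index subgroups `Λ ≤ Γ` whose right-translation action
on `Λ\Γ` is highly transitive. -/
def HTset (Γ : Type*) [Group Γ] : Set (Subgroup Γ) :=
  {Λ | Infinite (rQuot Λ) ∧ HTcoset Λ}

/-- The conjugation (right) action of `Γ` on its subgroups: `Λ · γ = γ⁻¹ Λ γ`. -/
def conjR {Γ : Type*} [Group Γ] (Λ : Subgroup Γ) (γ : Γ) : Subgroup Γ :=
  Λ.comap (MulAut.conj γ).toMonoidHom

/-- The right-translation action of `Γ` on `Λ\Γ` is highly faithful: for every finite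
`F ⊆ Γ ∖ {1}` there is a coset moved by every element of `F`. -/
def HFcoset {Γ : Type*} [Group Γ] (Λ : Subgroup Γ) : Prop :=
  ∀ F : Finset Γ, (∀ γ ∈ F, γ ≠ 1) → ∃ x : rQuot Λ, ∀ γ ∈ F, rAct Λ γ x ≠ x

section
variable {Γ : Type*} [Group Γ]
open scoped Classical

lemma isOpen_notMem (g : Γ) : IsOpen {H : Subgroup Γ | g ∉ H} := by
  letI : TopologicalSpace Prop := ⊥
  haveI : DiscreteTopology Prop := ⟨rfl⟩
  have h1 : Continuous (fun H : Subgroup Γ => (fun x : Γ => (x ∈ H : Prop))) :=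
    continuous_induced_dom
  have hc : Continuous (fun H : Subgroup Γ => (g ∈ H : Prop)) :=
    (continuous_apply g).comp h1
  exact (isOpen_discrete {p : Prop | ¬ p}).preimage hc

lemma isOpen_avoid (F : Finset Γ) : IsOpen {H : Subgroup Γ | ∀ γ ∈ F, γ ∉ H} := by
  have : {H : Subgroup Γ | ∀ γ ∈ F, γ ∉ H} = ⋂ γ ∈ F, {H : Subgroup Γ | γ ∉ H} := by
    ext H; simp
  rw [this]
  exact isOpen_biInter_finset fun γ _ => isOpen_notMem γ

lemma chabauty_basis {o : Set (Subgroup Γ)} (ho : IsOpen o) (hbot : (⊥ : Subgroup Γ) ∈ o) :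
    ∃ F : Finset Γ, (∀ γ ∈ F, γ ≠ 1) ∧ {H : Subgroup Γ | ∀ γ ∈ F, γ ∉ H} ⊆ o := by
  letI : TopologicalSpace Prop := ⊥
  obtain ⟨t, ht, rfl⟩ := isOpen_induced_iff.mp ho
  obtain ⟨I, u, hu, hsub⟩ := isOpen_pi_iff.mp ht _ hbot
  refine ⟨I.filter (· ≠ 1), fun γ hγ => (Finset.mem_filter.mp hγ).2, fun H hH => ?_⟩
  apply hsub
  intro γ hγ
  have hmem : ((γ ∈ (⊥ : Subgroup Γ)) : Prop) ∈ u γ := (hu γ hγ).2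
  show ((γ ∈ H) : Prop) ∈ u γ
  by_cases h1 : γ = 1
  · have : ((γ ∈ H) : Prop) = ((γ ∈ (⊥ : Subgroup Γ)) : Prop) :=
      propext (by subst h1; simp [Subgroup.one_mem])
    rw [this]; exact hmem
  · have : ((γ ∈ H) : Prop) = ((γ ∈ (⊥ : Subgroup Γ)) : Prop) :=
      propext (by simp [hH γ (Finset.mem_filter.mpr ⟨Finset.mem_coe.mp hγ, h1⟩), Subgroup.mem_bot, h1])
    rw [this]; exact hmem

lemma mem_closure_chabauty {C : Set (Subgroup Γ)} :
    (⊥ : Subgroup Γ) ∈ closure C ↔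
      ∀ F : Finset Γ, (∀ γ ∈ F, γ ≠ 1) → ∃ H ∈ C, ∀ γ ∈ F, γ ∉ H := by
  constructor
  · intro h F hF
    have := mem_closure_iff.mp h _ (isOpen_avoid F)
      (fun γ hγ => by simpa [Subgroup.mem_bot] using hF γ hγ)
    obtain ⟨H, hH1, hH2⟩ := this
    exact ⟨H, hH2, hH1⟩
  · intro h
    rw [mem_closure_iff]
    intro o ho hbot
    obtain ⟨F, hF, hsub⟩ := chabauty_basis ho hbot
    obtain ⟨H, hHC, hH⟩ := h F hF
    exact ⟨H, hsub hH, hHC⟩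

lemma mem_conjR_iff (Λ : Subgroup Γ) (g γ : Γ) : γ ∈ conjR Λ g ↔ g * γ * g⁻¹ ∈ Λ := by
  simp [conjR, Subgroup.mem_comap]

lemma rAct_fix_iff (Λ : Subgroup Γ) (γ g : Γ) :
    rAct Λ γ (Quotient.mk'' g) = Quotient.mk'' g ↔ γ ∈ conjR Λ g := by
  show Quotient.mk'' (g * γ) = Quotient.mk'' g ↔ _
  rw [Quotient.eq'', QuotientGroup.rightRel_apply, mem_conjR_iff]
  have key : g * (g * γ)⁻¹ = (g * γ * g⁻¹)⁻¹ := by group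
  rw [key, Λ.inv_mem_iff]

lemma hf_iff (Λ : Subgroup Γ) :
    HFcoset Λ ↔ ∀ F : Finset Γ, (∀ γ ∈ F, γ ≠ 1) → ∃ g : Γ, ∀ γ ∈ F, γ ∉ conjR Λ g := by
  constructor
  · intro h F hF
    obtain ⟨x, hx⟩ := h F hF
    obtain ⟨g, rfl⟩ := Quotient.exists_rep x
    exact ⟨g, fun γ hγ hmem => hx γ hγ ((rAct_fix_iff Λ γ g).mpr hmem)⟩
  · intro h F hF
    obtain ⟨g, hg⟩ := h F hF
    exact ⟨Quotient.mk'' g, fun γ hγ heq => hg γ hγ ((rAct_fix_iff Λ γ g).mp heq)⟩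

end

/-- A subgroup `Λ ≤ Γ` has highly faithful coset action iff the closure of its conjugacy
class in `Sub(Γ)` contains the trivial subgroup; moreover the set of subgroups with
highly faithful coset action is a `Gδ` subset of `Sub(Γ)`. -/
theorem highlyFaithful_iff_and_isGδ (Γ : Type*) [Group Γ] [Countable Γ] :
    (∀ Λ : Subgroup Γ,
      HFcoset Λ ↔ (⊥ : Subgroup Γ) ∈ closure {H : Subgroup Γ | ∃ γ : Γ, H = conjR Λ γ}) ∧
    IsGδ {Λ : Subgroup Γ | HFcoset Λ} := by
  classical
  constructor
  · intro Λ
    rw [hf_iff, mem_closure_chabauty]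
    constructor
    · intro h F hF
      obtain ⟨g, hg⟩ := h F hF
      exact ⟨conjR Λ g, ⟨g, rfl⟩, hg⟩
    · intro h F hF
      obtain ⟨H, ⟨g, rfl⟩, hg⟩ := h F hF
      exact ⟨g, hg⟩
  · have heq : {Λ : Subgroup Γ | HFcoset Λ} =
        ⋂ F : Finset Γ, ⋃ g : Γ,
          {Λ : Subgroup Γ | ∀ γ ∈ F, γ ≠ 1 → γ ∉ conjR Λ g} := by
      ext Λ
      simp only [Set.mem_iInter, Set.mem_iUnion, Set.mem_setOf_eq]
      rw [hf_iff]
      constructor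
      · intro h F
        obtain ⟨g, hg⟩ := h (F.filter (· ≠ 1)) (fun γ hγ => (Finset.mem_filter.mp hγ).2)
        exact ⟨g, fun γ hγ h1 => hg γ (Finset.mem_filter.mpr ⟨hγ, h1⟩)⟩
      · intro h F hF
        obtain ⟨g, hg⟩ := h F
        exact ⟨g, fun γ hγ => hg γ hγ (hF γ hγ)⟩
    rw [heq]
    refine .iInter fun F => IsOpen.isGδ (isOpen_iUnion fun g => ?_)
    have : {Λ : Subgroup Γ | ∀ γ ∈ F, γ ≠ 1 → γ ∉ conjR Λ g} =
        ⋂ γ ∈ F, {Λ : Subgroup Γ | γ ≠ 1 → g * γ * g⁻¹ ∉ Λ} := by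
      ext Λ; simp [mem_conjR_iff]
    rw [this]
    refine isOpen_biInter_finset fun γ _ => ?_
    by_cases h1 : γ = 1
    · simp [h1]
    · have : {Λ : Subgroup Γ | γ ≠ 1 → g * γ * g⁻¹ ∉ Λ} = {Λ : Subgroup Γ | g * γ * g⁻¹ ∉ Λ} := by
        ext Λ; simp [h1]
      rw [this]
      exact isOpen_notMem _
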